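/- Let G be a nonnegative matrix on an index set Λ partitioned into blocks indexed 2 (a finite set K'), 3 (a finite set Ã), and 4 (the set A^c), with h a vector on Λ. Let κ = K' ∪ Ã and suppose G_{κκ}^n → 0, so 𝓘_{κκ} = (I − G_{κκ})^{-1} exists with row blocks 𝓘_2, 𝓘_3. Suppose u* = ∑_{n≥0} G^n h converges absolutely componentwise, and suppose there exist nonnegative vectors v, ν on β = Ã ∪ A^c satisfying G_{ββ} v ≤ v − |h_β| and G_{ββ} ν ≤ ν − G_{β2} w for a fixed positive weight vector w on K'. Let ũ be the vector equal to 𝓘_i h_κ on blocks i = 2,3 and 0 on A^c, and let ε = u* − ũ. If ‖𝓘_2 G_{24} ν_4‖_w < 1, then with m(h) = ‖𝓘_2 G_{24} v_4 + 𝓘_2 |h_2|‖_w / (1 − ‖𝓘_2 G_{24} ν_4‖_w), the componentwise bounds |ε_i| ≤ 𝓘_i G_{i4} v_4 + 𝓘_i G_{i4} ν_4 · m(h) hold for i = 2,3, and |ε_4| ≤ v_4 + ν_4 · m(h). -/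

import Mathlib

section StmtHelpers
open Filter Topology Matrix Finset
open scoped NNReal

private theorem hasSum_sumType' {α β : Type*} {f : α ⊕ β → ℝ} {a b : ℝ}
    (ha : HasSum (fun x => f (Sum.inl x)) a) (hb : HasSum (fun y => f (Sum.inr y)) b) :
    HasSum f (a + b) := by
  have h1 : HasSum (f ∘ (Subtype.val : Set.range (Sum.inl : α → α ⊕ β) → α ⊕ β)) a :=
    (Equiv.ofInjective _ Sum.inl_injective).hasSum_iff.mp ha
  have h2 : HasSum (f ∘ (Subtype.val : Set.range (Sum.inr : β → α ⊕ β) → α ⊕ β)) b :=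
    (Equiv.ofInjective _ Sum.inr_injective).hasSum_iff.mp hb
  exact h1.add_isCompl Set.isCompl_range_inl_range_inr h2

private theorem tsum_sumType' {α β : Type*} {f : α ⊕ β → ℝ} (h : Summable f) :
    ∑' z, f z = ∑' x, f (Sum.inl x) + ∑' y, f (Sum.inr y) :=
  (hasSum_sumType' (h.comp_injective Sum.inl_injective).hasSum
    (h.comp_injective Sum.inr_injective).hasSum).tsum_eq

private theorem abs_tsum_le' {ι : Type*} {f : ι → ℝ} (h : Summable fun i => |f i|) :
    |∑' i, f i| ≤ ∑' i, |f i| := by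
  simpa [Real.norm_eq_abs] using
    norm_tsum_le_tsum_norm (f := f) (by simpa [Real.norm_eq_abs] using h)

/-- split a sum over `(K ⊕ A3) ⊕ A4` into the `K`-part and the `A3 ⊕ A4`-part. -/
private theorem tsum_split3 {K A3 A4 : Type*} [Fintype K] [Fintype A3]
    {F : (K ⊕ A3) ⊕ A4 → ℝ} (hF : Summable F) :
    ∑' z, F z = ∑ k : K, F (Sum.inl (Sum.inl k)) +
      ∑' x : A3 ⊕ A4, F (Sum.elim (fun a => Sum.inl (Sum.inr a)) Sum.inr x) := by
  have h4 : Summable fun y : A4 => F (Sum.inr y) := hF.comp_injective Sum.inr_injective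
  have h3 : HasSum (fun a : A3 => F (Sum.inl (Sum.inr a))) (∑ a : A3, F (Sum.inl (Sum.inr a))) :=
    hasSum_fintype _
  have hmix : ∑' x : A3 ⊕ A4, F (Sum.elim (fun a => Sum.inl (Sum.inr a)) Sum.inr x)
      = ∑ a : A3, F (Sum.inl (Sum.inr a)) + ∑' y : A4, F (Sum.inr y) :=
    (hasSum_sumType'
      (f := fun x : A3 ⊕ A4 => F (Sum.elim (fun a => Sum.inl (Sum.inr a)) Sum.inr x))
      h3 h4.hasSum).tsum_eq
  rw [tsum_sumType' hF, tsum_fintype, Fintype.sum_sum_type, hmix]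
  ring

private theorem sum_mulVec_apply {n : Type*} [Fintype n] {ι : Type*} (s : Finset ι)
    (A : ι → Matrix n n ℝ) (x : n → ℝ) (a : n) :
    ((∑ i ∈ s, A i) *ᵥ x) a = ∑ i ∈ s, (A i *ᵥ x) a := by
  simp only [Matrix.mulVec, dotProduct, Matrix.sum_apply, Finset.sum_mul]
  exact Finset.sum_comm

section Neumann
attribute [local instance] Matrix.linftyOpNormedRing

variable {n : Type*} [Fintype n] [DecidableEq n]

private lemma norm_le_sum_abs (B : Matrix n n ℝ) : ‖B‖ ≤ ∑ i, ∑ j, |B i j| := by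
  rw [Matrix.linfty_opNorm_def]
  have h : ((Finset.univ : Finset n).sup fun i => ∑ j, ‖B i j‖₊)
      ≤ ∑ i : n, ∑ j : n, ‖B i j‖₊ := by
    apply Finset.sup_le
    intro i _
    exact Finset.single_le_sum (f := fun i => ∑ j, ‖B i j‖₊) (fun i _ => zero_le)
      (Finset.mem_univ i)
  calc (((Finset.univ : Finset n).sup fun i => ∑ j, ‖B i j‖₊ : ℝ≥0) : ℝ)
      ≤ ((∑ i : n, ∑ j : n, ‖B i j‖₊ : ℝ≥0) : ℝ) := by exact_mod_cast h
    _ = ∑ i, ∑ j, |B i j| := by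
        push_cast
        simp [Real.norm_eq_abs]

private lemma abs_entry_le_norm (B : Matrix n n ℝ) (i j : n) : |B i j| ≤ ‖B‖ := by
  rw [Matrix.linfty_opNorm_def]
  have h : ‖B i j‖₊ ≤ (Finset.univ : Finset n).sup fun i => ∑ j, ‖B i j‖₊ := by
    refine le_trans ?_ (Finset.le_sup (Finset.mem_univ i))
    exact Finset.single_le_sum (f := fun j => ‖B i j‖₊) (fun _ _ => zero_le) (Finset.mem_univ j)
  calc |B i j| = ((‖B i j‖₊ : ℝ≥0) : ℝ) := by simp [Real.norm_eq_abs]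
    _ ≤ _ := by exact_mod_cast h

private theorem neumann_exists (A : Matrix n n ℝ)
    (hA : ∀ i j, Tendsto (fun k : ℕ => (A ^ k) i j) atTop (𝓝 (0 : ℝ))) :
    ∃ S : Matrix n n ℝ, (∀ i j, HasSum (fun k : ℕ => (A ^ k) i j) (S i j)) ∧
      (1 - A) * S = 1 ∧ S * (1 - A) = 1 := by
  have hnorm : Tendsto (fun k : ℕ => ‖A ^ k‖) atTop (𝓝 0) := by
    have hb : Tendsto (fun k : ℕ => ∑ i, ∑ j, |(A ^ k) i j|) atTop (𝓝 0) := by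
      have : Tendsto (fun k : ℕ => ∑ i, ∑ j, |(A ^ k) i j|) atTop
          (𝓝 (∑ i : n, ∑ j : n, |(0:ℝ)|)) := by
        apply tendsto_finset_sum
        intro i _
        apply tendsto_finset_sum
        intro j _
        exact (hA i j).abs
      simpa using this
    exact squeeze_zero (fun k => norm_nonneg _) (fun k => norm_le_sum_abs _) hb
  obtain ⟨C, hC⟩ : ∃ C : ℝ, ∀ k, ‖A ^ k‖ ≤ C := by
    obtain ⟨C, hC⟩ := hnorm.bddAbove_range
    exact ⟨C, fun k => hC ⟨k, rfl⟩⟩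
  have hC0 : 0 ≤ C := le_trans (norm_nonneg _) (hC 0)
  obtain ⟨N, hN, hN1⟩ : ∃ N : ℕ, ‖A ^ N‖ ≤ 1 / 2 ∧ 1 ≤ N := by
    have h1 : ∀ᶠ k in atTop, ‖A ^ k‖ < 1 / 2 :=
      hnorm.eventually_lt_const (by norm_num)
    obtain ⟨N, h1, h2⟩ := (h1.and (eventually_ge_atTop 1)).exists
    exact ⟨N, h1.le, h2⟩
  have decay : ∀ q k, N * q ≤ k → ‖A ^ k‖ ≤ C * (1 / 2) ^ q := by
    intro q
    induction q with
    | zero => intro k _; simpa using hC k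
    | succ q ih =>
      intro k hk
      rw [Nat.mul_succ] at hk
      have hNk : N ≤ k := by omega
      have hsplit : A ^ k = A ^ N * A ^ (k - N) := by
        rw [← pow_add, Nat.add_sub_cancel' hNk]
      have hk' : N * q ≤ k - N := by omega
      calc ‖A ^ k‖ ≤ ‖A ^ N‖ * ‖A ^ (k - N)‖ := by rw [hsplit]; exact norm_mul_le _ _
        _ ≤ (1 / 2) * (C * (1 / 2) ^ q) := by
            apply mul_le_mul hN (ih _ hk') (norm_nonneg _) (by norm_num)
        _ = C * (1 / 2) ^ (q + 1) := by ring
  have partial_bound : ∀ m : ℕ, ∑ k ∈ Finset.range m, ‖A ^ k‖ ≤ C * N * 2 := by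
    intro m
    have key : ∀ Q : ℕ, ∑ k ∈ Finset.range (N * Q), ‖A ^ k‖
        ≤ ∑ q ∈ Finset.range Q, (N : ℝ) * (C * (1 / 2) ^ q) := by
      intro Q
      induction Q with
      | zero => simp
      | succ Q ih =>
        rw [Nat.mul_succ, Finset.sum_range_add, Finset.sum_range_succ]
        gcongr
        calc ∑ k ∈ Finset.range N, ‖A ^ (N * Q + k)‖
            ≤ ∑ _k ∈ Finset.range N, C * (1 / 2) ^ Q := by
              apply Finset.sum_le_sum
              intro k _
              exact decay Q _ (Nat.le_add_right _ _)
          _ = (N : ℝ) * (C * (1 / 2) ^ Q) := by simp [mul_comm]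
    calc ∑ k ∈ Finset.range m, ‖A ^ k‖ ≤ ∑ k ∈ Finset.range (N * m), ‖A ^ k‖ := by
          apply Finset.sum_le_sum_of_subset_of_nonneg
          · exact Finset.range_subset_range.mpr (Nat.le_mul_of_pos_left m (by omega))
          · intro k _ _; exact norm_nonneg _
      _ ≤ ∑ q ∈ Finset.range m, (N : ℝ) * (C * (1 / 2) ^ q) := key m
      _ = (C * N) * ∑ q ∈ Finset.range m, (1 / 2) ^ q := by
          rw [Finset.mul_sum]; congr 1; ext q; ring
      _ ≤ (C * N) * 2 := by
          apply mul_le_mul_of_nonneg_left (sum_geometric_two_le m) (by positivity)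
      _ = C * N * 2 := rfl
  have hnorm_summable : Summable (fun k : ℕ => ‖A ^ k‖) :=
    summable_of_sum_range_le (fun k => norm_nonneg _) partial_bound
  have hent : ∀ i j, Summable (fun k : ℕ => (A ^ k) i j) := by
    intro i j
    refine Summable.of_abs ?_
    exact Summable.of_nonneg_of_le (fun k => abs_nonneg _)
      (fun k => abs_entry_le_norm _ i j) hnorm_summable
  set S : Matrix n n ℝ := Matrix.of fun i j => ∑' k : ℕ, (A ^ k) i j with hSdef
  have hSsum : ∀ i j, HasSum (fun k : ℕ => (A ^ k) i j) (S i j) := fun i j => (hent i j).hasSum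
  have hshift : ∀ i j, HasSum (fun k : ℕ => (A ^ (k + 1)) i j)
      (S i j - (1 : Matrix n n ℝ) i j) := by
    intro i j
    refine (hasSum_nat_add_iff (f := fun k : ℕ => (A ^ k) i j) 1).mpr ?_
    simpa using hSsum i j
  have hAS : A * S = S - 1 := by
    ext i j
    have h1 : HasSum (fun k : ℕ => ∑ b, A i b * (A ^ k) b j) (∑ b, A i b * S b j) :=
      hasSum_sum fun b _ => (hSsum b j).mul_left (A i b)
    have h2 : HasSum (fun k : ℕ => (A ^ (k + 1)) i j) (∑ b, A i b * S b j) := by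
      refine h1.congr_fun ?_
      intro k
      rw [pow_succ', Matrix.mul_apply]
    have := h2.unique (hshift i j)
    rw [Matrix.mul_apply, Matrix.sub_apply]
    rw [← this]
  have hSA : S * A = S - 1 := by
    ext i j
    have h1 : HasSum (fun k : ℕ => ∑ b, (A ^ k) i b * A b j) (∑ b, S i b * A b j) :=
      hasSum_sum fun b _ => (hSsum i b).mul_right (A b j)
    have h2 : HasSum (fun k : ℕ => (A ^ (k + 1)) i j) (∑ b, S i b * A b j) := by
      refine h1.congr_fun ?_
      intro k
      rw [pow_succ, Matrix.mul_apply]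
    have := h2.unique (hshift i j)
    rw [Matrix.mul_apply, Matrix.sub_apply]
    rw [← this]
  refine ⟨S, hSsum, ?_, ?_⟩
  · rw [sub_mul, one_mul, hAS]; exact sub_sub_cancel S 1
  · rw [mul_sub, mul_one, hSA]; exact sub_sub_cancel S 1

end Neumann
end StmtHelpers


open Filter Topology Matrix

set_option maxHeartbeats 1000000

/-- Theorem 1 of the paper: a posteriori error bounds for the truncated
solution of the nonnegative linear system `u = h + G u`.  The state space is
`Λ = (K' ⊕ Ã) ⊕ A⁴` with `K'`, `Ã` finite; `κ = K' ⊕ Ã`; `β = Ã ⊕ A⁴`.  The exact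
solution `u* = ∑_{n≥0} Gⁿ h` converges absolutely componentwise (encoded by the iterate
sequence `W`).  Given the Lyapunov functions `v, ν` on `β` satisfying
`G_{ββ} v ≤ v - |h_β|` and `G_{ββ} ν ≤ ν - G_{β2} w` for a positive weight `w` on `K'`,
and the contraction condition `‖𝓘₂ G₂₄ ν₄‖_w < 1`, the error `ε = u* - ũ` of the
truncated solution `ũ = 𝓘 h_κ` on `κ`, `0` on `A⁴` satisfies
`|ε_i| ≤ 𝓘_i G_{i4} v₄ + 𝓘_i G_{i4} ν₄ · m(h)` for `i = 2,3` and
`|ε₄| ≤ v₄ + ν₄ · m(h)`, with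
`m(h) = ‖𝓘₂ G₂₄ v₄ + 𝓘₂ |h₂|‖_w / (1 - ‖𝓘₂ G₂₄ ν₄‖_w)`. -/
theorem stmt2 {K A3 A4 : Type*}
    [Fintype K] [Fintype A3] [Nonempty K] [DecidableEq K] [DecidableEq A3]
    (G : ((K ⊕ A3) ⊕ A4) → ((K ⊕ A3) ⊕ A4) → ℝ)
    (hG : ∀ x y, 0 ≤ G x y)
    (h u : ((K ⊕ A3) ⊕ A4) → ℝ)
    -- the series u* = ∑ Gⁿ h, converging absolutely componentwise
    (W : ℕ → ((K ⊕ A3) ⊕ A4) → ℝ)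
    (hW0 : W 0 = h)
    (hWrec : ∀ n x, HasSum (fun y => G x y * W n y) (W (n + 1) x))
    (hWabs : ∀ n x, Summable (fun y => |G x y * W n y|))
    (habs : ∀ x, Summable (fun n : ℕ => |W n x|))
    (hu : ∀ x, HasSum (fun n : ℕ => W n x) (u x))
    -- the κ-block and its inverse 𝓘 = (I - G_{κκ})⁻¹
    (Gk : Matrix (K ⊕ A3) (K ⊕ A3) ℝ)
    (hGk : ∀ a b, Gk a b = G (Sum.inl a) (Sum.inl b))
    (hpow : Tendsto (fun n : ℕ => Gk ^ n) atTop (𝓝 0))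
    (Ic : Matrix (K ⊕ A3) (K ⊕ A3) ℝ) (hIc : Ic = (1 - Gk)⁻¹)
    -- weight and Lyapunov functions on β = Ã ⊕ A⁴
    (w : K → ℝ) (hw : ∀ k, 0 < w k)
    (ib : (A3 ⊕ A4) → ((K ⊕ A3) ⊕ A4))
    (hib : ib = Sum.elim (fun a => Sum.inl (Sum.inr a)) Sum.inr)
    (v ν : A3 ⊕ A4 → ℝ) (hv : ∀ x, 0 ≤ v x) (hν : ∀ x, 0 ≤ ν x)
    (hvsum : ∀ x, Summable (fun y : A3 ⊕ A4 => G (ib x) (ib y) * v y))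
    (hLv : ∀ x, ∑' y : A3 ⊕ A4, G (ib x) (ib y) * v y ≤ v x - |h (ib x)|)
    (hνsum : ∀ x, Summable (fun y : A3 ⊕ A4 => G (ib x) (ib y) * ν y))
    (hLν : ∀ x, ∑' y : A3 ⊕ A4, G (ib x) (ib y) * ν y ≤
      ν x - ∑ k : K, G (ib x) (Sum.inl (Sum.inl k)) * w k)
    -- the block products G_{κ4} v₄ and G_{κ4} ν₄
    (g4v g4ν : (K ⊕ A3) → ℝ)
    (hg4v : ∀ a, HasSum (fun y : A4 => G (Sum.inl a) (Sum.inr y) * v (Sum.inr y)) (g4v a))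
    (hg4ν : ∀ a, HasSum (fun y : A4 => G (Sum.inl a) (Sum.inr y) * ν (Sum.inr y)) (g4ν a))
    -- the contraction condition ‖𝓘₂ G₂₄ ν₄‖_w < 1 and the constant m(h)
    (hcontr : (⨆ k : K, |Ic.mulVec g4ν (Sum.inl k)| / w k) < 1)
    (m : ℝ)
    (hm : m =
      (⨆ k : K, |Ic.mulVec g4v (Sum.inl k) +
          Ic.mulVec (fun a => |h (Sum.inl a)|) (Sum.inl k)| / w k) /
        (1 - ⨆ k : K, |Ic.mulVec g4ν (Sum.inl k)| / w k))
    -- the truncated approximation ũ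
    (ut : ((K ⊕ A3) ⊕ A4) → ℝ)
    (hut : ut = Sum.elim (fun a => Ic.mulVec (fun b => h (Sum.inl b)) a) (fun _ => 0)) :
    (∀ a : K ⊕ A3,
      |u (Sum.inl a) - ut (Sum.inl a)| ≤ Ic.mulVec g4v a + Ic.mulVec g4ν a * m) ∧
    (∀ y : A4,
      |u (Sum.inr y) - ut (Sum.inr y)| ≤ v (Sum.inr y) + ν (Sum.inr y) * m) := by
  subst hib hut
  classical
  -- the componentwise absolute series
  set U : ((K ⊕ A3) ⊕ A4) → ℝ := fun z => ∑' n : ℕ, |W n z| with hUdef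
  have hU0 : ∀ z, 0 ≤ U z := fun z => tsum_nonneg fun n => abs_nonneg _
  have hUabs : ∀ z, |u z| ≤ U z := by
    intro z
    rw [← (hu z).tsum_eq]
    exact abs_tsum_le' (habs z)
  -- the weighted sup of U on the K block
  set M : ℝ := ⨆ k : K, U (Sum.inl (Sum.inl k)) / w k with hMdef
  have hMbdd : BddAbove (Set.range fun k : K => U (Sum.inl (Sum.inl k)) / w k) :=
    Set.Finite.bddAbove (Set.finite_range _)
  have hM0 : 0 ≤ M := by
    obtain ⟨k⟩ := ‹Nonempty K›
    exact le_trans (div_nonneg (hU0 _) (hw k).le) (le_ciSup hMbdd k)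
  have hU2 : ∀ k : K, U (Sum.inl (Sum.inl k)) ≤ M * w k := by
    intro k
    have := le_ciSup hMbdd k
    rw [div_le_iff₀ (hw k)] at this
    linarith [this]
  -- basic facts about the iterates
  have hWabs' : ∀ n z, Summable (fun y => G z y * |W n y|) := by
    intro n z
    refine (hWabs n z).congr fun y => ?_
    rw [abs_mul, abs_of_nonneg (hG z y)]
  have hWstep : ∀ n z, |W (n + 1) z| ≤ ∑' y, G z y * |W n y| := by
    intro n z
    rw [← (hWrec n z).tsum_eq]
    refine (abs_tsum_le' (hWabs n z)).trans_eq ?_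
    exact tsum_congr fun y => by rw [abs_mul, abs_of_nonneg (hG z y)]
  -- partial sums
  set P : ℕ → ((K ⊕ A3) ⊕ A4) → ℝ := fun n z => ∑ i ∈ Finset.range (n + 1), |W i z| with hPdef
  have hP0 : ∀ n z, 0 ≤ P n z := fun n z => Finset.sum_nonneg fun i _ => abs_nonneg _
  have hPU : ∀ n z, P n z ≤ U z := fun n z =>
    Summable.sum_le_tsum (Finset.range (n + 1)) (fun i _ => abs_nonneg _) (habs z)
  have hPsum : ∀ n z, Summable (fun y => G z y * P n y) := by
    intro n z
    have := summable_sum (s := Finset.range (n + 1))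
      (f := fun i (y : (K ⊕ A3) ⊕ A4) => G z y * |W i y|) (fun i _ => hWabs' i z)
    refine this.congr fun y => ?_
    rw [hPdef, Finset.mul_sum]
  have hPrec : ∀ n z, P (n + 1) z ≤ |h z| + ∑' y, G z y * P n y := by
    intro n z
    have e1 : P (n + 1) z = (∑ i ∈ Finset.range (n + 1), |W (i + 1) z|) + |h z| := by
      simp only [hPdef]
      rw [Finset.sum_range_succ' (fun i => |W i z|) (n + 1), hW0]
    rw [e1]
    have e2 : (∑ i ∈ Finset.range (n + 1), |W (i + 1) z|)
        ≤ ∑ i ∈ Finset.range (n + 1), ∑' y, G z y * |W i y| :=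
      Finset.sum_le_sum fun i _ => hWstep i z
    have e3 : ∑ i ∈ Finset.range (n + 1), ∑' y, G z y * |W i y|
        = ∑' y, G z y * P n y := by
      rw [← Summable.tsum_finsetSum (fun i _ => hWabs' i z)]
      exact tsum_congr fun y => by rw [hPdef, Finset.mul_sum]
    linarith [e2, e3.le, e3.ge]

  -- name the embedding of the β block
  set ι : (A3 ⊕ A4) → ((K ⊕ A3) ⊕ A4) :=
    Sum.elim (fun a => Sum.inl (Sum.inr a)) Sum.inr with hι
  have hιinj : Function.Injective ι := by
    rw [hι]
    rintro (a | a) (b | b) hab <;> simp_all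
  -- Step A : Lyapunov bound on the β block
  have hPβ : ∀ n (x : A3 ⊕ A4), P n (ι x) ≤ v x + M * ν x := by
    intro n
    induction n with
    | zero =>
      intro x
      have h0 : 0 ≤ ∑' y : A3 ⊕ A4, G (ι x) (ι y) * v y :=
        tsum_nonneg fun y => mul_nonneg (hG _ _) (hv y)
      have h1 := hLv x
      have h2 : P 0 (ι x) = |h (ι x)| := by
        simp only [hPdef]
        simp [Finset.sum_range_one, hW0]
      rw [h2]
      nlinarith [mul_nonneg hM0 (hν x)]
    | succ n ih =>
      intro x
      have hsplit := tsum_split3 (hPsum n (ι x))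
      have hb1 : ∑ k : K, G (ι x) (Sum.inl (Sum.inl k)) * P n (Sum.inl (Sum.inl k))
          ≤ M * ∑ k : K, G (ι x) (Sum.inl (Sum.inl k)) * w k := by
        rw [Finset.mul_sum]
        refine Finset.sum_le_sum fun k _ => ?_
        have hk : P n (Sum.inl (Sum.inl k)) ≤ M * w k := (hPU n _).trans (hU2 k)
        calc G (ι x) (Sum.inl (Sum.inl k)) * P n (Sum.inl (Sum.inl k))
            ≤ G (ι x) (Sum.inl (Sum.inl k)) * (M * w k) :=
              mul_le_mul_of_nonneg_left hk (hG _ _)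
          _ = M * (G (ι x) (Sum.inl (Sum.inl k)) * w k) := by ring
      have hLsum : Summable (fun x' : A3 ⊕ A4 => G (ι x) (ι x') * P n (ι x')) :=
        (hPsum n (ι x)).comp_injective hιinj
      have hRsum : Summable (fun x' : A3 ⊕ A4 => G (ι x) (ι x') * (v x' + M * ν x')) :=
        ((hvsum x).add ((hνsum x).mul_left M)).congr fun x' => by ring
      have hb2 : ∑' x' : A3 ⊕ A4, G (ι x) (ι x') * P n (ι x')
          ≤ (v x - |h (ι x)|) +
            M * (ν x - ∑ k : K, G (ι x) (Sum.inl (Sum.inl k)) * w k) := by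
        have h1 : ∑' x' : A3 ⊕ A4, G (ι x) (ι x') * P n (ι x')
            ≤ ∑' x' : A3 ⊕ A4, G (ι x) (ι x') * (v x' + M * ν x') :=
          Summable.tsum_le_tsum (fun x' => mul_le_mul_of_nonneg_left (ih x') (hG _ _)) hLsum hRsum
        have e : (fun x' : A3 ⊕ A4 => G (ι x) (ι x') * (v x' + M * ν x'))
            = fun x' => G (ι x) (ι x') * v x' + M * (G (ι x) (ι x') * ν x') :=
          funext fun x' => by ring
        have h2 : ∑' x' : A3 ⊕ A4, G (ι x) (ι x') * (v x' + M * ν x')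
            = (∑' x' : A3 ⊕ A4, G (ι x) (ι x') * v x')
              + M * ∑' x' : A3 ⊕ A4, G (ι x) (ι x') * ν x' := by
          rw [e, Summable.tsum_add (hvsum x) ((hνsum x).mul_left M), tsum_mul_left]
        refine h1.trans ?_
        rw [h2]
        exact add_le_add (hLv x) (mul_le_mul_of_nonneg_left (hLν x) hM0)
      calc P (n + 1) (ι x) ≤ |h (ι x)| + ∑' y, G (ι x) y * P n y := hPrec n (ι x)
        _ = |h (ι x)| + (∑ k : K, G (ι x) (Sum.inl (Sum.inl k)) * P n (Sum.inl (Sum.inl k))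
            + ∑' x' : A3 ⊕ A4, G (ι x) (ι x') * P n (ι x')) := by rw [hsplit]
        _ ≤ |h (ι x)| + (M * ∑ k : K, G (ι x) (Sum.inl (Sum.inl k)) * w k
            + ((v x - |h (ι x)|) +
              M * (ν x - ∑ k : K, G (ι x) (Sum.inl (Sum.inl k)) * w k))) := by
            exact add_le_add_right (add_le_add hb1 hb2) _
        _ = v x + M * ν x := by ring
  have hUβ : ∀ x : A3 ⊕ A4, U (ι x) ≤ v x + M * ν x := by
    intro x
    refine Real.tsum_le_of_sum_range_le (fun n => abs_nonneg _) fun n => ?_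
    cases n with
    | zero => simpa using add_nonneg (hv x) (mul_nonneg hM0 (hν x))
    | succ n => exact hPβ n x

  -- Step B : the Neumann series for Gk
  have hentry : ∀ a b, Tendsto (fun k : ℕ => (Gk ^ k) a b) atTop (𝓝 (0 : ℝ)) := by
    intro a b
    have hcont : Continuous fun B : Matrix (K ⊕ A3) (K ⊕ A3) ℝ => B a b :=
      Continuous.matrix_elem continuous_id a b
    have := (hcont.tendsto 0).comp hpow
    simpa [Function.comp_def] using this
  obtain ⟨S, hSsum, hSl, hSr⟩ := neumann_exists Gk hentry
  have hIcS : Ic = S := by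
    rw [hIc]
    exact Matrix.inv_eq_right_inv hSl
  rw [hIcS] at hcontr hm ⊢
  have hGk0 : ∀ a b, 0 ≤ Gk a b := fun a b => (hGk a b).symm ▸ hG _ _
  have hGkpow : ∀ (i : ℕ) a b, 0 ≤ (Gk ^ i) a b := by
    intro i
    induction i with
    | zero => intro a b; rw [pow_zero]; by_cases hab : a = b <;> simp [Matrix.one_apply, hab]
    | succ i ih =>
      intro a b
      rw [pow_succ, Matrix.mul_apply]
      exact Finset.sum_nonneg fun c _ => mul_nonneg (ih a c) (hGk0 c b)
  have hS0 : ∀ a b, 0 ≤ S a b := fun a b =>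
    (hSsum a b).tsum_eq ▸ tsum_nonneg fun i => hGkpow i a b
  have hSmv : ∀ (x : (K ⊕ A3) → ℝ), (∀ b, 0 ≤ x b) → ∀ a, 0 ≤ (S *ᵥ x) a := by
    intro x hx a
    exact Finset.sum_nonneg fun b _ => mul_nonneg (hS0 a b) (hx b)
  -- nonnegativity of the block products
  have hg4v0 : ∀ a, 0 ≤ g4v a := fun a =>
    (hg4v a).tsum_eq ▸ tsum_nonneg fun y => mul_nonneg (hG _ _) (hv _)
  have hg4ν0 : ∀ a, 0 ≤ g4ν a := fun a =>
    (hg4ν a).tsum_eq ▸ tsum_nonneg fun y => mul_nonneg (hG _ _) (hν _)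
  -- Step C preliminaries : the A4-block row sums against U
  have hvν4 : ∀ a : K ⊕ A3, Summable (fun y4 : A4 =>
      G (Sum.inl a) (Sum.inr y4) * (v (Sum.inr y4) + M * ν (Sum.inr y4))) := by
    intro a
    exact ((hg4v a).summable.add ((hg4ν a).summable.mul_left M)).congr fun y4 => by ring
  have hvν4sum : ∀ a : K ⊕ A3, ∑' y4 : A4,
      G (Sum.inl a) (Sum.inr y4) * (v (Sum.inr y4) + M * ν (Sum.inr y4))
      = g4v a + M * g4ν a := by
    intro a
    have e : (fun y4 : A4 => G (Sum.inl a) (Sum.inr y4) * (v (Sum.inr y4) + M * ν (Sum.inr y4)))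
        = fun y4 => G (Sum.inl a) (Sum.inr y4) * v (Sum.inr y4)
          + M * (G (Sum.inl a) (Sum.inr y4) * ν (Sum.inr y4)) := funext fun y4 => by ring
    rw [e, Summable.tsum_add (hg4v a).summable ((hg4ν a).summable.mul_left M), tsum_mul_left,
      (hg4v a).tsum_eq, (hg4ν a).tsum_eq]
  have hUι4 : ∀ y4 : A4, U (Sum.inr y4) ≤ v (Sum.inr y4) + M * ν (Sum.inr y4) := by
    intro y4
    have := hUβ (Sum.inr y4)
    simpa [hι] using this
  have hGU4sum : ∀ a : K ⊕ A3,
      Summable (fun y4 : A4 => G (Sum.inl a) (Sum.inr y4) * U (Sum.inr y4)) := by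
    intro a
    refine Summable.of_nonneg_of_le (fun y4 => mul_nonneg (hG _ _) (hU0 _))
      (fun y4 => mul_le_mul_of_nonneg_left (hUι4 y4) (hG _ _)) (hvν4 a)
  have hGU4 : ∀ a : K ⊕ A3, ∑' y4 : A4, G (Sum.inl a) (Sum.inr y4) * U (Sum.inr y4)
      ≤ g4v a + M * g4ν a := by
    intro a
    refine le_trans (Summable.tsum_le_tsum (fun y4 => mul_le_mul_of_nonneg_left (hUι4 y4) (hG _ _))
      (hGU4sum a) (hvν4 a)) (hvν4sum a).le
  -- Step C : bound on the κ block
  set c : (K ⊕ A3) → ℝ := fun a => |h (Sum.inl a)| + (g4v a + M * g4ν a) with hcdef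
  have hc0 : ∀ a, 0 ≤ c a := fun a =>
    add_nonneg (abs_nonneg _) (add_nonneg (hg4v0 a) (mul_nonneg hM0 (hg4ν0 a)))
  have hCκ : ∀ n (a : K ⊕ A3),
      P n (Sum.inl a) ≤ ((∑ i ∈ Finset.range (n + 1), Gk ^ i) *ᵥ c) a := by
    intro n
    induction n with
    | zero =>
      intro a
      have h2 : P 0 (Sum.inl a) = |h (Sum.inl a)| := by
        simp only [hPdef]
        simp [Finset.sum_range_one, hW0]
      rw [h2]
      have : ((∑ i ∈ Finset.range 1, Gk ^ i) *ᵥ c) a = c a := by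
        simp [Matrix.one_mulVec]
      rw [this, hcdef]
      have := add_nonneg (hg4v0 a) (mul_nonneg hM0 (hg4ν0 a))
      simp only []
      linarith [this]
    | succ n ih =>
      intro a
      have hsplit2 : ∑' y, G (Sum.inl a) y * P n y
          = (∑ b : K ⊕ A3, G (Sum.inl a) (Sum.inl b) * P n (Sum.inl b))
            + ∑' y4 : A4, G (Sum.inl a) (Sum.inr y4) * P n (Sum.inr y4) := by
        rw [tsum_sumType' (hPsum n (Sum.inl a)), tsum_fintype]
      have h4P : ∑' y4 : A4, G (Sum.inl a) (Sum.inr y4) * P n (Sum.inr y4)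
          ≤ g4v a + M * g4ν a := by
        refine le_trans (Summable.tsum_le_tsum
          (fun y4 => mul_le_mul_of_nonneg_left (hPU n (Sum.inr y4)) (hG _ _))
          ((hPsum n (Sum.inl a)).comp_injective Sum.inr_injective) (hGU4sum a)) (hGU4 a)
      have hb1 : ∑ b : K ⊕ A3, G (Sum.inl a) (Sum.inl b) * P n (Sum.inl b)
          ≤ ∑ b : K ⊕ A3, Gk a b * (((∑ i ∈ Finset.range (n + 1), Gk ^ i) *ᵥ c) b) := by
        refine Finset.sum_le_sum fun b _ => ?_
        rw [← hGk a b]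
        exact mul_le_mul_of_nonneg_left (ih b) (hGk0 a b)
      have hmat : (∑ i ∈ Finset.range (n + 2), Gk ^ i)
          = 1 + Gk * ∑ i ∈ Finset.range (n + 1), Gk ^ i := by
        rw [Finset.sum_range_succ' (fun i => Gk ^ i) (n + 1), pow_zero, Finset.mul_sum, add_comm]
        congr 1
        exact Finset.sum_congr rfl fun i _ => pow_succ' Gk i
      calc P (n + 1) (Sum.inl a) ≤ |h (Sum.inl a)| + ∑' y, G (Sum.inl a) y * P n y :=
            hPrec n (Sum.inl a)
        _ = |h (Sum.inl a)| + ((∑ b : K ⊕ A3, G (Sum.inl a) (Sum.inl b) * P n (Sum.inl b))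
            + ∑' y4 : A4, G (Sum.inl a) (Sum.inr y4) * P n (Sum.inr y4)) := by rw [hsplit2]
        _ ≤ |h (Sum.inl a)|
            + ((∑ b : K ⊕ A3, Gk a b * (((∑ i ∈ Finset.range (n + 1), Gk ^ i) *ᵥ c) b))
              + (g4v a + M * g4ν a)) := add_le_add_right (add_le_add hb1 h4P) _
        _ = c a + (Gk *ᵥ ((∑ i ∈ Finset.range (n + 1), Gk ^ i) *ᵥ c)) a := by
            rw [hcdef]
            simp only [Matrix.mulVec, dotProduct]
            ring
        _ = ((∑ i ∈ Finset.range (n + 2), Gk ^ i) *ᵥ c) a := by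
            rw [Matrix.mulVec_mulVec, hmat, Matrix.add_mulVec, Matrix.one_mulVec, Pi.add_apply]
  have hUκ : ∀ a : K ⊕ A3, U (Sum.inl a) ≤ (S *ᵥ c) a := by
    intro a
    have h3 : HasSum (fun i : ℕ => ((Gk ^ i) *ᵥ c) a) ((S *ᵥ c) a) := by
      have := hasSum_sum (s := (Finset.univ : Finset (K ⊕ A3)))
        (f := fun b (i : ℕ) => (Gk ^ i) a b * c b) (a := fun b => S a b * c b)
        (fun b _ => (hSsum a b).mul_right (c b))
      exact this
    refine Real.tsum_le_of_sum_range_le (fun n => abs_nonneg _) fun n => ?_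
    cases n with
    | zero => simpa using hSmv c hc0 a
    | succ n =>
      have h1 : P n (Sum.inl a) ≤ ((∑ i ∈ Finset.range (n + 1), Gk ^ i) *ᵥ c) a := hCκ n a
      have h2 : ((∑ i ∈ Finset.range (n + 1), Gk ^ i) *ᵥ c) a
          = ∑ i ∈ Finset.range (n + 1), ((Gk ^ i) *ᵥ c) a :=
        sum_mulVec_apply _ _ _ _
      refine le_trans h1 ?_
      rw [h2]
      refine sum_le_hasSum (Finset.range (n + 1)) (fun i _ => ?_) h3
      exact Finset.sum_nonneg fun b _ => mul_nonneg (hGkpow i a b) (hc0 b)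
  -- deduce M ≤ m
  set sup1 : ℝ := ⨆ k : K, |(S *ᵥ g4v) (Sum.inl k)
      + (S *ᵥ fun a => |h (Sum.inl a)|) (Sum.inl k)| / w k with hsup1
  set sup2 : ℝ := ⨆ k : K, |(S *ᵥ g4ν) (Sum.inl k)| / w k with hsup2
  have hsup1bdd : BddAbove (Set.range fun k : K => |(S *ᵥ g4v) (Sum.inl k)
      + (S *ᵥ fun a => |h (Sum.inl a)|) (Sum.inl k)| / w k) :=
    Set.Finite.bddAbove (Set.finite_range _)
  have hsup2bdd : BddAbove (Set.range fun k : K => |(S *ᵥ g4ν) (Sum.inl k)| / w k) :=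
    Set.Finite.bddAbove (Set.finite_range _)
  have hMle : M ≤ sup1 + M * sup2 := by
    rw [hMdef]
    refine ciSup_le fun k => ?_
    have e : (S *ᵥ c) (Sum.inl k) = ((S *ᵥ g4v) (Sum.inl k)
        + (S *ᵥ fun a => |h (Sum.inl a)|) (Sum.inl k))
        + M * (S *ᵥ g4ν) (Sum.inl k) := by
      simp only [Matrix.mulVec, dotProduct]
      calc ∑ b, S (Sum.inl k) b * c b
          = ∑ b, (S (Sum.inl k) b * g4v b + (S (Sum.inl k) b * |h (Sum.inl b)|
              + M * (S (Sum.inl k) b * g4ν b))) := by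
            refine Finset.sum_congr rfl fun b _ => ?_
            rw [hcdef]
            ring
        _ = ((∑ b, S (Sum.inl k) b * g4v b) + ∑ b, S (Sum.inl k) b * |h (Sum.inl b)|)
            + M * ∑ b, S (Sum.inl k) b * g4ν b := by
            rw [Finset.sum_add_distrib, Finset.sum_add_distrib, ← Finset.mul_sum, add_assoc]
    have h1 : U (Sum.inl (Sum.inl k)) / w k ≤ (S *ᵥ c) (Sum.inl k) / w k := by
      gcongr
      · exact (hw k).le
      · exact hUκ (Sum.inl k)
    refine h1.trans ?_
    rw [e]
    have hA0 : 0 ≤ (S *ᵥ g4v) (Sum.inl k) + (S *ᵥ fun a => |h (Sum.inl a)|) (Sum.inl k) :=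
      add_nonneg (hSmv g4v hg4v0 _) (hSmv _ (fun b => abs_nonneg _) _)
    have hB0 : 0 ≤ (S *ᵥ g4ν) (Sum.inl k) := hSmv g4ν hg4ν0 _
    rw [add_div, mul_div_assoc]
    refine add_le_add ?_ ?_
    · have := le_ciSup hsup1bdd k
      rwa [abs_of_nonneg hA0] at this
    · refine mul_le_mul_of_nonneg_left ?_ hM0
      have := le_ciSup hsup2bdd k
      rwa [abs_of_nonneg hB0] at this
  have hsup2lt : sup2 < 1 := hcontr
  have hsup10 : 0 ≤ sup1 := by
    obtain ⟨k⟩ := ‹Nonempty K›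
    exact le_trans (div_nonneg (abs_nonneg _) (hw k).le) (le_ciSup hsup1bdd k)
  have hMm : M ≤ m := by
    rw [hm]
    rw [le_div_iff₀ (by linarith)]
    nlinarith [hMle, hM0]
  have hm0 : 0 ≤ m := hM0.trans hMm

  -- Step D : fixed point equation on the κ block and conclusion
  set uvec : (K ⊕ A3) → ℝ := fun b => u (Sum.inl b) with huvec
  set hvec : (K ⊕ A3) → ℝ := fun b => h (Sum.inl b) with hhvec
  set G4u : (K ⊕ A3) → ℝ :=
    fun b => ∑' y4 : A4, G (Sum.inl b) (Sum.inr y4) * u (Sum.inr y4) with hG4udef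
  have hGUsum : ∀ a : K ⊕ A3, Summable (fun y => G (Sum.inl a) y * U y) := by
    intro a
    have h1 : HasSum (fun b : K ⊕ A3 => G (Sum.inl a) (Sum.inl b) * U (Sum.inl b))
        (∑ b : K ⊕ A3, G (Sum.inl a) (Sum.inl b) * U (Sum.inl b)) := hasSum_fintype _
    exact (hasSum_sumType' h1 (hGU4sum a).hasSum).summable
  have hFabs : ∀ a : K ⊕ A3,
      Summable (fun p : ((K ⊕ A3) ⊕ A4) × ℕ => |G (Sum.inl a) p.1 * W p.2 p.1|) := by
    intro a
    refine (summable_prod_of_nonneg (fun p => abs_nonneg _)).mpr ⟨fun y => ?_, ?_⟩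
    · exact ((habs y).mul_left |G (Sum.inl a) y|).congr fun n => (abs_mul _ _).symm
    · refine (hGUsum a).congr fun y => ?_
      rw [hUdef, ← tsum_mul_left]
      exact tsum_congr fun n => by rw [abs_mul, abs_of_nonneg (hG _ _)]
  have husum : ∀ a, Summable (fun y => G (Sum.inl a) y * u y) := by
    intro a
    refine Summable.of_abs (Summable.of_nonneg_of_le (fun y => abs_nonneg _)
      (fun y => ?_) (hGUsum a))
    rw [abs_mul, abs_of_nonneg (hG _ _)]
    exact mul_le_mul_of_nonneg_left (hUabs y) (hG _ _)
  have hswap : ∀ a : K ⊕ A3,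
      ∑' y, G (Sum.inl a) y * u y = u (Sum.inl a) - h (Sum.inl a) := by
    intro a
    have hF : Summable (Function.uncurry
        fun (y : (K ⊕ A3) ⊕ A4) (n : ℕ) => G (Sum.inl a) y * W n y) :=
      Summable.of_abs (hFabs a)
    calc ∑' y, G (Sum.inl a) y * u y = ∑' y, ∑' n : ℕ, G (Sum.inl a) y * W n y := by
          refine tsum_congr fun y => ?_
          rw [← (hu y).tsum_eq, tsum_mul_left]
      _ = ∑' n : ℕ, ∑' y, G (Sum.inl a) y * W n y := (Summable.tsum_comm hF).symm
      _ = ∑' n : ℕ, W (n + 1) (Sum.inl a) := tsum_congr fun n => (hWrec n (Sum.inl a)).tsum_eq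
      _ = u (Sum.inl a) - h (Sum.inl a) := by
          have h1 : HasSum (fun n : ℕ => W (n + 1) (Sum.inl a))
              (u (Sum.inl a) - h (Sum.inl a)) := by
            refine (hasSum_nat_add_iff (f := fun n => W n (Sum.inl a)) 1).mpr ?_
            simpa [hW0] using hu (Sum.inl a)
          exact h1.tsum_eq
  have heq : ∀ a, uvec a = hvec a + ((Gk *ᵥ uvec) a + G4u a) := by
    intro a
    have h1 := hswap a
    rw [tsum_sumType' (husum a), tsum_fintype] at h1
    have h2 : (Gk *ᵥ uvec) a = ∑ b : K ⊕ A3, G (Sum.inl a) (Sum.inl b) * u (Sum.inl b) := by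
      simp only [Matrix.mulVec, dotProduct, huvec]
      exact Finset.sum_congr rfl fun b _ => by rw [hGk a b]
    rw [h2, hG4udef, huvec, hhvec]
    simp only []
    linarith [h1]
  have hfix : (1 - Gk) *ᵥ uvec = fun a => hvec a + G4u a := by
    funext a
    rw [Matrix.sub_mulVec, Pi.sub_apply, Matrix.one_mulVec]
    have := heq a
    linarith [this]
  have hεv : (fun a => uvec a - (S *ᵥ hvec) a) = S *ᵥ G4u := by
    have h5 : (1 - Gk) *ᵥ (uvec - S *ᵥ hvec) = G4u := by
      rw [Matrix.mulVec_sub, hfix, Matrix.mulVec_mulVec, hSl, Matrix.one_mulVec]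
      funext a
      simp [Pi.sub_apply]
    calc (fun a => uvec a - (S *ᵥ hvec) a) = uvec - S *ᵥ hvec := rfl
      _ = (1 : Matrix (K ⊕ A3) (K ⊕ A3) ℝ) *ᵥ (uvec - S *ᵥ hvec) := (Matrix.one_mulVec _).symm
      _ = (S * (1 - Gk)) *ᵥ (uvec - S *ᵥ hvec) := by rw [hSr]
      _ = S *ᵥ ((1 - Gk) *ᵥ (uvec - S *ᵥ hvec)) := (Matrix.mulVec_mulVec _ _ _).symm
      _ = S *ᵥ G4u := by rw [h5]
  have hG4ub : ∀ b, |G4u b| ≤ g4v b + M * g4ν b := by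
    intro b
    have habs' : Summable (fun y4 : A4 => |G (Sum.inl b) (Sum.inr y4) * u (Sum.inr y4)|) := by
      refine Summable.of_nonneg_of_le (fun y4 => abs_nonneg _) (fun y4 => ?_) (hGU4sum b)
      rw [abs_mul, abs_of_nonneg (hG _ _)]
      exact mul_le_mul_of_nonneg_left (hUabs _) (hG _ _)
    rw [hG4udef]
    simp only []
    refine le_trans (abs_tsum_le' habs') (le_trans ?_ (hGU4 b))
    refine Summable.tsum_le_tsum (fun y4 => ?_) habs' (hGU4sum b)
    rw [abs_mul, abs_of_nonneg (hG _ _)]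
    exact mul_le_mul_of_nonneg_left (hUabs _) (hG _ _)
  constructor
  · intro a
    have hε := congrFun hεv a
    simp only [Sum.elim_inl]
    calc |u (Sum.inl a) - (S *ᵥ hvec) a| = |(S *ᵥ G4u) a| := by
          rw [show u (Sum.inl a) = uvec a from rfl, hε]
      _ = |∑ b, S a b * G4u b| := by simp only [Matrix.mulVec, dotProduct]
      _ ≤ ∑ b, |S a b * G4u b| := Finset.abs_sum_le_sum_abs _ _
      _ = ∑ b, S a b * |G4u b| :=
          Finset.sum_congr rfl fun b _ => by rw [abs_mul, abs_of_nonneg (hS0 a b)]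
      _ ≤ ∑ b, S a b * (g4v b + M * g4ν b) :=
          Finset.sum_le_sum fun b _ => mul_le_mul_of_nonneg_left (hG4ub b) (hS0 a b)
      _ = (∑ b, S a b * g4v b) + M * ∑ b, S a b * g4ν b := by
          rw [show (fun b => S a b * (g4v b + M * g4ν b))
              = fun b => S a b * g4v b + M * (S a b * g4ν b) from funext fun b => by ring]
          rw [Finset.sum_add_distrib, ← Finset.mul_sum]
      _ = (S *ᵥ g4v) a + M * (S *ᵥ g4ν) a := by simp only [Matrix.mulVec, dotProduct]
      _ ≤ (S *ᵥ g4v) a + (S *ᵥ g4ν) a * m := by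
          have h0 : 0 ≤ (S *ᵥ g4ν) a := hSmv g4ν hg4ν0 a
          have h1 : M * (S *ᵥ g4ν) a ≤ (S *ᵥ g4ν) a * m := by
            rw [mul_comm]
            exact mul_le_mul_of_nonneg_left hMm h0
          linarith
  · intro y
    simp only [Sum.elim_inr, sub_zero]
    have h1 : |u (Sum.inr y)| ≤ U (Sum.inr y) := hUabs _
    have h2 := hUι4 y
    have h3 : M * ν (Sum.inr y) ≤ ν (Sum.inr y) * m := by
      rw [mul_comm]
      exact mul_le_mul_of_nonneg_left hMm (hν _)
    linarith
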